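/- Let 0 < q ≤ 2 and let σ = (σ_s)_{s∈ℕ} be a positive sequence with ‖σ^{-1}‖_{ℓ_q} ≤ 1. Then for every n ∈ ℕ the Kolmogorov n-width of the unit ball B_{ℂ,σ} in L²(U, ℂ; μ) satisfies d_n(B_{ℂ,σ}, L²(U,ℂ;μ)) ≤ 2^{1/q} n^{-1/q}. -/
import Mathlib


open MeasureTheory
open scoped BigOperators

/-- The Kolmogorov `n`-width of a set `F` in a normed space `E`. -/
noncomputable def kolWidth {E : Type*} [NormedAddCommGroup E] [NormedSpace ℂ E]
    (n : ℕ) (F : Set E) : ℝ :=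
  sInf {d : ℝ | ∃ L : Submodule ℂ E, FiniteDimensional ℂ ↥L ∧
    Module.finrank ℂ ↥L ≤ n ∧
    d = sSup {e : ℝ | ∃ f ∈ F, e = sInf {r : ℝ | ∃ g ∈ L, r = ‖f - g‖}}}

/-- if `0 < q ≤ 2` and `‖σ⁻¹‖_{ℓ_q} ≤ 1` then the Kolmogorov `n`-width of
the unit ball `B_{ℂ,σ}` in `L²(U,ℂ;μ)` is at most `2^{1/q} n^{-1/q}` for every `n ≥ 1`. -/
theorem stmt_5
    {U : Type*} [MeasurableSpace U] (μ : Measure U) [IsProbabilityMeasure μ]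
    (φ : HilbertBasis ℕ ℂ (Lp ℂ 2 μ))
    (σ : ℕ → ℝ) (hσpos : ∀ s, 0 < σ s) (hσmono : Monotone σ)
    (q : ℝ) (hq : 0 < q) (hq2 : q ≤ 2)
    (hsum : Summable fun s => ((σ s)⁻¹) ^ q)
    (hnorm : (∑' s, ((σ s)⁻¹) ^ q) ≤ 1)
    (n : ℕ) (hn : 1 ≤ n) :
    kolWidth n {f : Lp ℂ 2 μ | ∑' s, (σ s) ^ 2 * ‖φ.repr f s‖ ^ 2 ≤ 1}
      ≤ (2 : ℝ) ^ (1 / q) * (n : ℝ) ^ (-(1 / q)) := by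
  classical
  set E := Lp ℂ 2 μ
  set F : Set E := {f : E | ∑' s, (σ s) ^ 2 * ‖φ.repr f s‖ ^ 2 ≤ 1} with hFdef
  set B : ℝ := (2 : ℝ) ^ (1 / q) * (n : ℝ) ^ (-(1 / q)) with hBdef
  have hq' : q ≠ 0 := hq.ne'
  have hnpos : (0 : ℝ) < n := by exact_mod_cast hn
  have hBnonneg : (0 : ℝ) ≤ B := by positivity
  -- key numeric estimate : (σ n)⁻¹ ≤ n ^ (-(1/q))
  have hkey : (σ n)⁻¹ ≤ (n : ℝ) ^ (-(1 / q)) := by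
    have hterm : ∀ s ∈ Finset.range n, (σ (n - 1))⁻¹ ^ q ≤ (σ s)⁻¹ ^ q := by
      intro s hs
      have hs' : s ≤ n - 1 := Nat.le_pred_of_lt (Finset.mem_range.mp hs)
      have : (σ (n - 1))⁻¹ ≤ (σ s)⁻¹ :=
        inv_anti₀ (hσpos s) (hσmono hs')
      exact Real.rpow_le_rpow (inv_nonneg.mpr (hσpos _).le) this hq.le
    have h2 : (n : ℝ) * (σ (n - 1))⁻¹ ^ q ≤ 1 := by
      calc (n : ℝ) * (σ (n - 1))⁻¹ ^ q
          = ∑ _s ∈ Finset.range n, (σ (n - 1))⁻¹ ^ q := by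
            simp [Finset.sum_const, nsmul_eq_mul]
        _ ≤ ∑ s ∈ Finset.range n, (σ s)⁻¹ ^ q := Finset.sum_le_sum hterm
        _ ≤ ∑' s, (σ s)⁻¹ ^ q :=
            Summable.sum_le_tsum _ (fun s _ => Real.rpow_nonneg (inv_nonneg.mpr (hσpos s).le) q) hsum
        _ ≤ 1 := hnorm
    have h3 : (σ (n - 1))⁻¹ ^ q ≤ (n : ℝ)⁻¹ := by
      rw [show ((n:ℝ))⁻¹ = 1 / (n:ℝ) from inv_eq_one_div _, le_div_iff₀ hnpos]
      linarith
    have h4 : (σ (n - 1))⁻¹ ≤ (n : ℝ) ^ (-(1 / q)) := by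
      have hx : (0 : ℝ) ≤ (σ (n - 1))⁻¹ := inv_nonneg.mpr (hσpos _).le
      have hid : (σ (n - 1))⁻¹ = ((σ (n - 1))⁻¹ ^ q) ^ (1 / q) := by
        rw [← Real.rpow_mul hx, mul_one_div, div_self hq', Real.rpow_one]
      calc (σ (n - 1))⁻¹ = ((σ (n - 1))⁻¹ ^ q) ^ (1 / q) := hid
        _ ≤ ((n : ℝ)⁻¹) ^ (1 / q) :=
            Real.rpow_le_rpow (Real.rpow_nonneg hx q) h3 (by positivity)
        _ = (n : ℝ) ^ (-(1 / q)) := by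
            rw [← Real.rpow_neg_one (n : ℝ), ← Real.rpow_mul hnpos.le]
            ring_nf
    exact le_trans (inv_anti₀ (hσpos (n - 1)) (hσmono (Nat.sub_le n 1))) h4
  have hnB : (n : ℝ) ^ (-(1 / q)) ≤ B := by
    have h12 : (1 : ℝ) ≤ (2 : ℝ) ^ (1 / q) := by
      have := Real.rpow_le_rpow (by norm_num : (0:ℝ) ≤ 1) (by norm_num : (1:ℝ) ≤ 2)
        (by positivity : (0:ℝ) ≤ 1 / q)
      simpa using this
    calc (n : ℝ) ^ (-(1 / q)) = 1 * (n : ℝ) ^ (-(1 / q)) := (one_mul _).symm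
      _ ≤ B := by
          rw [hBdef]
          exact mul_le_mul_of_nonneg_right h12 (Real.rpow_nonneg hnpos.le _)
  -- the approximating subspace
  set L : Submodule ℂ E :=
    Submodule.span ℂ ((Finset.image φ (Finset.range n) : Finset E) : Set E) with hLdef
  have hLfin : FiniteDimensional ℂ ↥L := FiniteDimensional.span_finset ℂ _
  have hLrank : Module.finrank ℂ ↥L ≤ n := by
    refine le_trans (finrank_span_finset_le_card _) ?_
    exact le_trans Finset.card_image_le (by simp)
  -- basic facts about distance sets
  have hTne : ∀ (M : Submodule ℂ E) (f : E),
      ({r : ℝ | ∃ g ∈ M, r = ‖f - g‖}).Nonempty :=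
    fun M f => ⟨‖f - 0‖, 0, M.zero_mem, rfl⟩
  have hTbdd : ∀ (M : Submodule ℂ E) (f : E),
      BddBelow {r : ℝ | ∃ g ∈ M, r = ‖f - g‖} := by
    rintro M f
    refine ⟨0, ?_⟩
    rintro r ⟨g, _, rfl⟩
    positivity
  have hTnonneg : ∀ (M : Submodule ℂ E) (f : E),
      0 ≤ sInf {r : ℝ | ∃ g ∈ M, r = ‖f - g‖} := by
    intro M f
    refine le_csInf (hTne M f) ?_
    rintro r ⟨g, _, rfl⟩
    positivity
  -- distance bound for "good" f
  have hdist : ∀ f : E, Summable (fun s => (σ s) ^ 2 * ‖φ.repr f s‖ ^ 2) →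
      (∑' s, (σ s) ^ 2 * ‖φ.repr f s‖ ^ 2) ≤ 1 →
      sInf {r : ℝ | ∃ g ∈ L, r = ‖f - g‖} ≤ (σ n)⁻¹ := by
    intro f hsf hf1
    set a : ℕ → ℂ := fun s => φ.repr f s with ha
    set g₀ : E := ∑ s ∈ Finset.range n, a s • φ s with hg₀
    have hg₀mem : g₀ ∈ L := by
      refine Submodule.sum_mem _ ?_
      intro s hs
      refine Submodule.smul_mem _ _ (Submodule.subset_span ?_)
      simp only [Finset.coe_image, Set.mem_image, Finset.mem_coe]
      exact ⟨s, hs, rfl⟩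
    have hrepr : ∀ t, φ.repr (f - g₀) t = if t < n then 0 else a t := by
      intro t
      have h1 : φ.repr g₀ = ∑ s ∈ Finset.range n, a s • lp.single 2 s (1 : ℂ) := by
        rw [hg₀, map_sum]
        congr 1
        ext s
        rw [LinearIsometryEquiv.map_smul, φ.repr_self]
      have h2 : φ.repr g₀ t = if t < n then a t else 0 := by
        rw [h1]
        have := lp.coeFn_sum (E := fun _ : ℕ => ℂ) (p := 2) (fun s => a s • lp.single 2 s (1 : ℂ)) (Finset.range n)
        rw [this]
        rw [Finset.sum_apply]
        have heq : ∀ s ∈ Finset.range n,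
            ((a s • lp.single 2 s (1 : ℂ) : lp (fun _ : ℕ => ℂ) 2) : ∀ _ : ℕ, ℂ) t = if s = t then a t else 0 := by
          intro s hs
          by_cases hst : s = t
          · subst hst
            simp [lp.coeFn_smul, lp.single_apply_self]
          · have h0 : (lp.single 2 s (1 : ℂ) : lp (fun _ : ℕ => ℂ) 2) t = 0 :=
              lp.single_apply_ne (E := fun _ : ℕ => ℂ) 2 s (1 : ℂ) (fun h => hst h.symm)
            simp [lp.coeFn_smul, h0, hst]
        rw [Finset.sum_congr rfl heq]
        by_cases ht : t < n
        · rw [Finset.sum_ite_eq' (Finset.range n) t (fun _ => a t)]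
          simp [ht]
        · rw [Finset.sum_ite_eq' (Finset.range n) t (fun _ => a t)]
          simp [ht]
      rw [map_sub]
      have : (φ.repr f - φ.repr g₀) t = φ.repr f t - φ.repr g₀ t := rfl
      rw [this, h2]
      by_cases ht : t < n <;> simp [ht, ha]
    -- norm computation
    have hnorm_sq : ‖f - g₀‖ ^ (2 : ℕ) ≤ ((σ n)⁻¹) ^ (2 : ℕ) := by
      have hiso : ‖f - g₀‖ = ‖φ.repr (f - g₀)‖ := (LinearIsometryEquiv.norm_map _ _).symm
      have hp : (0 : ℝ) < (2 : ENNReal).toReal := by norm_num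
      have hpow := lp.norm_rpow_eq_tsum hp (φ.repr (f - g₀))
      have htoReal : (2 : ENNReal).toReal = (2 : ℝ) := by norm_num
      rw [htoReal] at hpow
      have hbound : ∀ t, ‖φ.repr (f - g₀) t‖ ^ (2 : ℝ)
          ≤ ((σ n)⁻¹) ^ (2 : ℕ) * ((σ t) ^ 2 * ‖a t‖ ^ 2) := by
        intro t
        rw [hrepr t]
        by_cases ht : t < n
        · simp only [ht, if_true, norm_zero]
          rw [Real.zero_rpow (by norm_num)]
          positivity
        · simp only [ht, if_false]
          rw [Real.rpow_two]
          have hσn : σ n ≤ σ t := hσmono (not_lt.mp ht)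
          have h0n : 0 < σ n := hσpos n
          have hinv : 1 ≤ (σ n)⁻¹ * σ t := by
            rw [← div_eq_inv_mul]
            exact (one_le_div h0n).mpr hσn
          have h1 : (1:ℝ) ≤ ((σ n)⁻¹ * σ t) ^ 2 := by
            nlinarith [sq_nonneg ((σ n)⁻¹ * σ t - 1)]
          calc ‖a t‖ ^ 2 = 1 * ‖a t‖ ^ 2 := (one_mul _).symm
            _ ≤ ((σ n)⁻¹ * σ t) ^ 2 * ‖a t‖ ^ 2 :=
                mul_le_mul_of_nonneg_right h1 (sq_nonneg _)
            _ = ((σ n)⁻¹) ^ 2 * ((σ t) ^ 2 * ‖a t‖ ^ 2) := by ring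
      have hRHSsum : Summable (fun t => ((σ n)⁻¹) ^ (2 : ℕ) * ((σ t) ^ 2 * ‖a t‖ ^ 2)) :=
        hsf.mul_left _
      have hLHSsum : Summable (fun t => ‖φ.repr (f - g₀) t‖ ^ (2 : ℝ)) :=
        Summable.of_nonneg_of_le (fun t => Real.rpow_nonneg (norm_nonneg _) _) hbound hRHSsum
      have hsum_le : (∑' t, ‖φ.repr (f - g₀) t‖ ^ (2 : ℝ))
          ≤ ∑' t, ((σ n)⁻¹) ^ (2 : ℕ) * ((σ t) ^ 2 * ‖a t‖ ^ 2) :=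
        Summable.tsum_le_tsum hbound hLHSsum hRHSsum
      have h5 : (∑' t, ((σ n)⁻¹) ^ (2 : ℕ) * ((σ t) ^ 2 * ‖a t‖ ^ 2))
          ≤ ((σ n)⁻¹) ^ (2 : ℕ) := by
        rw [tsum_mul_left]
        calc ((σ n)⁻¹) ^ (2:ℕ) * (∑' t, (σ t) ^ 2 * ‖a t‖ ^ 2)
            ≤ ((σ n)⁻¹) ^ (2:ℕ) * 1 :=
              mul_le_mul_of_nonneg_left hf1 (by positivity)
          _ = ((σ n)⁻¹) ^ (2:ℕ) := mul_one _
      have : ‖f - g₀‖ ^ (2 : ℝ) ≤ ((σ n)⁻¹) ^ (2 : ℕ) := by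
        rw [hiso, hpow]
        exact le_trans hsum_le h5
      rwa [Real.rpow_two] at this
    have hfg : ‖f - g₀‖ ≤ (σ n)⁻¹ := by
      have h0 : (0 : ℝ) ≤ (σ n)⁻¹ := inv_nonneg.mpr (hσpos n).le
      exact (pow_le_pow_iff_left₀ (norm_nonneg _) h0 (by norm_num)).mp hnorm_sq
    exact le_trans (csInf_le (hTbdd L f) ⟨g₀, hg₀mem, rfl⟩) hfg
  -- scaling inequality
  have hscale : ∀ (f : E) (c : ℂ), c ≠ 0 →
      ‖c‖ * sInf {r : ℝ | ∃ g ∈ L, r = ‖f - g‖}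
        ≤ sInf {r : ℝ | ∃ g ∈ L, r = ‖c • f - g‖} := by
    intro f c hc
    refine le_csInf (hTne L (c • f)) ?_
    rintro r ⟨g, hg, rfl⟩
    have hgmem : c⁻¹ • g ∈ L := Submodule.smul_mem _ _ hg
    have : ‖c • f - g‖ = ‖c‖ * ‖f - c⁻¹ • g‖ := by
      rw [← norm_smul]
      congr 1
      rw [smul_sub, smul_smul, mul_inv_cancel₀ hc, one_smul]
    rw [this]
    exact mul_le_mul_of_nonneg_left (csInf_le (hTbdd L f) ⟨c⁻¹ • g, hgmem, rfl⟩)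
      (norm_nonneg c)
  -- membership of scalings for "bad" f
  have hFsmul : ∀ f ∈ F, ¬ Summable (fun s => (σ s) ^ 2 * ‖φ.repr f s‖ ^ 2) →
      ∀ c : ℂ, c ≠ 0 → c • f ∈ F := by
    intro f _ hns c hc
    have hrepr : ∀ s, (σ s) ^ 2 * ‖φ.repr (c • f) s‖ ^ 2
        = ‖c‖ ^ 2 * ((σ s) ^ 2 * ‖φ.repr f s‖ ^ 2) := by
      intro s
      have : φ.repr (c • f) s = c * φ.repr f s := by
        rw [LinearIsometryEquiv.map_smul]; rfl
      rw [this, norm_mul, mul_pow]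
      ring
    have hnotsum : ¬ Summable (fun s => (σ s) ^ 2 * ‖φ.repr (c • f) s‖ ^ 2) := by
      intro h
      rw [funext hrepr] at h
      have hc2 : (‖c‖ : ℝ) ^ 2 ≠ 0 := pow_ne_zero _ (norm_ne_zero_iff.mpr hc)
      exact hns ((summable_mul_left_iff hc2).mp h)
    show (∑' s, (σ s) ^ 2 * ‖φ.repr (c • f) s‖ ^ 2) ≤ 1
    rw [tsum_eq_zero_of_not_summable hnotsum]
    norm_num
  -- the main sup bound
  have hsup : sSup {e : ℝ | ∃ f ∈ F, e = sInf {r : ℝ | ∃ g ∈ L, r = ‖f - g‖}} ≤ B := by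
    set Se := {e : ℝ | ∃ f ∈ F, e = sInf {r : ℝ | ∃ g ∈ L, r = ‖f - g‖}} with hSe
    by_cases hbdd : BddAbove Se
    · obtain ⟨M, hM⟩ := hbdd
      refine Real.sSup_le ?_ hBnonneg
      rintro e ⟨f, hf, rfl⟩
      by_cases hs : Summable (fun s => (σ s) ^ 2 * ‖φ.repr f s‖ ^ 2)
      · exact le_trans (hdist f hs hf) (le_trans hkey hnB)
      · -- bad f: show the inf is ≤ 0
        by_contra hpos
        push_neg at hpos
        set e := sInf {r : ℝ | ∃ g ∈ L, r = ‖f - g‖} with he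
        have hep : 0 < e := lt_of_le_of_lt hBnonneg hpos
        obtain ⟨k, hk⟩ := exists_nat_gt (M / e)
        have hk0 : (0 : ℝ) < k := by
          have hMe : e ≤ M := hM ⟨f, hf, rfl⟩
          have : (0:ℝ) < M / e := div_pos (lt_of_lt_of_le hep hMe) hep
          exact lt_trans this hk
        have hkc : ((k : ℂ)) ≠ 0 := by
          simp only [ne_eq, Nat.cast_eq_zero]
          exact_mod_cast (by exact_mod_cast hk0 : (0:ℝ) < (k:ℝ)).ne'
        have hmem : sInf {r : ℝ | ∃ g ∈ L, r = ‖(k : ℂ) • f - g‖} ∈ Se :=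
          ⟨(k : ℂ) • f, hFsmul f hf hs _ hkc, rfl⟩
        have hle : sInf {r : ℝ | ∃ g ∈ L, r = ‖(k : ℂ) • f - g‖} ≤ M := hM hmem
        have hge : (k : ℝ) * e ≤ sInf {r : ℝ | ∃ g ∈ L, r = ‖(k : ℂ) • f - g‖} := by
          have h := hscale f (k : ℂ) hkc
          have hnk : ‖((k : ℕ) : ℂ)‖ = (k : ℝ) := by
            simp
          rwa [hnk] at h
        have : M < (k : ℝ) * e := by
          rw [div_lt_iff₀ hep] at hk
          exact hk
        linarith
    · rw [hSe, Real.sSup_of_not_bddAbove hbdd]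
      exact hBnonneg
  -- conclude
  have hmem : sSup {e : ℝ | ∃ f ∈ F, e = sInf {r : ℝ | ∃ g ∈ L, r = ‖f - g‖}}
      ∈ {d : ℝ | ∃ L' : Submodule ℂ E, FiniteDimensional ℂ ↥L' ∧
        Module.finrank ℂ ↥L' ≤ n ∧
        d = sSup {e : ℝ | ∃ f ∈ F, e = sInf {r : ℝ | ∃ g ∈ L', r = ‖f - g‖}}} :=
    ⟨L, hLfin, hLrank, rfl⟩
  have hbddS : BddBelow {d : ℝ | ∃ L' : Submodule ℂ E, FiniteDimensional ℂ ↥L' ∧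
      Module.finrank ℂ ↥L' ≤ n ∧
      d = sSup {e : ℝ | ∃ f ∈ F, e = sInf {r : ℝ | ∃ g ∈ L', r = ‖f - g‖}}} := by
    refine ⟨0, ?_⟩
    rintro d ⟨L', _, _, rfl⟩
    refine Real.sSup_nonneg ?_
    rintro e ⟨f, _, rfl⟩
    exact hTnonneg L' f
  exact le_trans (csInf_le hbddS hmem) hsup
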